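/- Let E be a real inner product space, p ≥ 2 an integer, ε > 0, M > 0, and 0 < C ≤ M^{p−1} / p^p. Let f, h : E → ℝ be differentiable with f convex and h 1-uniformly convex of order p. Let x, y, z : ℕ → E satisfy z 0 = x 0 and, for all k ≥ 0: x(k+1) = (p/(k+p)) • z k + (k/(k+p)) • y k; ∇h(z(k+1)) = ∇h(z k) − (ε C p (k+1)^{(p−1)}) • ∇f(y(k+1)); and ⟨∇f(y k), x k − y k⟩ ≥ M ε^{1/(p−1)} ‖∇f(y k)‖^{p/(p−1)}. Define the estimate function ψ_k(w) = C p Σ_{i=0}^{k} i^{(p−1)} [f(y i) + ⟨∇f(y i), w − y i⟩] + (1/ε) D_h(w, x 0). Then for all k ≥ 0: ψ_k(z k) ≥ C k^{(p)} f(y k). -/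

import Mathlib

open Real
open scoped RealInnerProductSpace

/-- The rising factorial `k^{(q)} = k (k+1) ⋯ (k+q−1)`. -/
def risingFactorial (k q : ℕ) : ℕ := ∏ i ∈ Finset.range q, (k + i)

lemma rf_zero {q : ℕ} (hq : 0 < q) : risingFactorial 0 q = 0 := by
  apply Finset.prod_eq_zero (Finset.mem_range.mpr hq) (by simp)

lemma rf_succ_left (k q : ℕ) : risingFactorial k (q + 1) = k * risingFactorial (k + 1) q := by
  unfold risingFactorial
  rw [Finset.prod_range_succ', Nat.add_zero, mul_comm]
  congr 1
  apply Finset.prod_congr rfl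
  intro i _
  omega

lemma rf_succ_right (k q : ℕ) : risingFactorial k (q + 1) = risingFactorial k q * (k + q) := by
  unfold risingFactorial
  rw [Finset.prod_range_succ]

lemma rf_pos (k q : ℕ) (hk : 0 < k) : 0 < risingFactorial k q := by
  apply Finset.prod_pos
  intro i _
  omega

lemma rf_le (k q : ℕ) : risingFactorial (k+1) q * q ^ q ≤ ((k + 1 + q) * (q + 1)) ^ q := by
  calc risingFactorial (k+1) q * q ^ q ≤ (k+1+q)^q * (q+1)^q := by
        apply Nat.mul_le_mul
        · have := Finset.prod_le_pow_card (Finset.range q) (fun i => k + 1 + i) (k + 1 + q)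
            (by intro i hi; simp only [Finset.mem_range] at hi; show k + 1 + i ≤ k + 1 + q; omega)
          simpa [risingFactorial] using this
        · exact Nat.pow_le_pow_left (by omega) q
    _ = ((k + 1 + q) * (q + 1)) ^ q := (Nat.mul_pow _ _ _).symm

lemma young_aux (p : ℕ) (hp : 2 ≤ p) {ε M A kp a r : ℝ} (hε : 0 < ε) (hM : 0 < M)
    (hA : 0 < A) (hkp : 0 < kp) (ha : 0 ≤ a) (hr : 0 ≤ r)
    (hb : A * (p : ℝ) * ((p : ℝ) - 1) ^ (p - 1) ≤ M ^ (p - 1) * kp ^ (p - 1)) :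
    A * (p : ℝ) * (a * r) ≤
      A * kp * (M * ε ^ (1 / ((p : ℝ) - 1)) * a ^ ((p : ℝ) / ((p : ℝ) - 1)))
        + 1 / (ε * (p : ℝ)) * r ^ p := by
  have hP2 : (2:ℝ) ≤ (p:ℝ) := by exact_mod_cast hp
  have hP : 1 < (p:ℝ) := by linarith
  have hP0 : 0 < (p:ℝ) := by linarith
  have hP1 : 0 < (p:ℝ) - 1 := by linarith
  set P := (p:ℝ) with hPdef
  set Q := P / (P - 1) with hQdef
  have hQpos : 0 < Q := by positivity
  have hconj : P.HolderConjugate Q := by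
    exact (Real.holderConjugate_iff_eq_conjExponent hP).mpr hQdef
  set e := ε ^ (1/P) with hedef
  have he : 0 < e := rpow_pos_of_pos hε _
  have hePow : e ^ P = ε := by
    rw [hedef, ← Real.rpow_mul hε.le, one_div, inv_mul_cancel₀ hP0.ne', Real.rpow_one]
  have heQ : e ^ Q = ε ^ (1 / (P - 1)) := by
    rw [hedef, ← Real.rpow_mul hε.le]
    congr 1
    rw [hQdef]
    field_simp
  have hcast : ((p - 1 : ℕ) : ℝ) = P - 1 := by
    rw [Nat.cast_sub (by omega : 1 ≤ p), Nat.cast_one, hPdef]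
  have hy1 := Real.young_inequality_of_nonneg (a := r / e) (b := A * P * e * a)
    (by positivity) (by positivity) hconj
  have h1 : r / e * (A * P * e * a) = A * P * (a * r) := by
    field_simp
  have h2 : (r / e) ^ P = r ^ p / ε := by
    rw [Real.div_rpow hr he.le, hePow, Real.rpow_natCast]
  have h3 : (A * P * e * a) ^ Q = (A * P) ^ Q * ε ^ (1 / (P - 1)) * a ^ Q := by
    rw [Real.mul_rpow (by positivity) ha, Real.mul_rpow (by positivity) he.le, heQ]
  have hAP : (0:ℝ) < A * P := by positivity
  have hkey : (A * P) ^ Q / Q ≤ A * kp * M := by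
    apply le_of_pow_le_pow_left₀ (n := p - 1) (by omega) (by positivity)
    have e1 : ((A * P) ^ Q) ^ (p - 1) = (A * P) ^ p := by
      rw [← Real.rpow_natCast ((A * P) ^ Q) (p - 1), ← Real.rpow_mul hAP.le, hcast,
        hQdef, div_mul_cancel₀ _ hP1.ne', hPdef, Real.rpow_natCast]
    have hpowP : P ^ p = P ^ (p - 1) * P := by
      conv_lhs => rw [show p = p - 1 + 1 by omega]
      rw [pow_succ]
    have hpowA : A ^ p = A ^ (p - 1) * A := by
      conv_lhs => rw [show p = p - 1 + 1 by omega]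
      rw [pow_succ]
    have e2 : ((A * P) ^ Q / Q) ^ (p - 1) = A ^ (p - 1) * (A * P * (P - 1) ^ (p - 1)) := by
      rw [div_pow, e1, hQdef, div_pow, mul_pow, hpowP, hpowA]
      rw [div_div_eq_mul_div, div_eq_iff (by positivity)]
      ring
    have e3 : (A * kp * M) ^ (p - 1) = A ^ (p - 1) * (M ^ (p - 1) * kp ^ (p - 1)) := by
      rw [mul_pow, mul_pow]
      ring
    rw [e2, e3]
    exact mul_le_mul_of_nonneg_left hb (by positivity)
  calc A * P * (a * r) = r / e * (A * P * e * a) := h1.symm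
    _ ≤ (r / e) ^ P / P + (A * P * e * a) ^ Q / Q := hy1
    _ = 1 / (ε * P) * r ^ p + (A * P) ^ Q / Q * (ε ^ (1 / (P - 1)) * a ^ Q) := by
        rw [h2, h3]
        ring
    _ ≤ 1 / (ε * P) * r ^ p + A * kp * M * (ε ^ (1 / (P - 1)) * a ^ Q) := by
        have := mul_le_mul_of_nonneg_right hkey
          (show (0:ℝ) ≤ ε ^ (1 / (P - 1)) * a ^ Q by positivity)
        linarith
    _ = A * kp * (M * ε ^ (1 / (P - 1)) * a ^ Q) + 1 / (ε * P) * r ^ p := by ring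

/-- The estimate-function lemma (Lemma 1 in the proof of Theorem 3):
for the rate-matching discretization, the estimate function
`ψ_k(w) = C p Σ_{i=0}^k i^{(p−1)} [f (y i) + ⟪∇f (y i), w − y i⟫] + (1/ε) D_h(w, x 0)`
satisfies `ψ_k (z k) ≥ C k^{(p)} f (y k)`. -/
theorem estimate_function_lower_bound
    {E : Type*} [NormedAddCommGroup E] [InnerProductSpace ℝ E] [CompleteSpace E]
    (p : ℕ) (hp : 2 ≤ p) (ε M C : ℝ) (hε : 0 < ε) (hM : 0 < M)
    (hC : 0 < C) (hC' : C ≤ M ^ (p - 1) / (p : ℝ) ^ p)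
    (f h : E → ℝ) (hf : Differentiable ℝ f) (hh : Differentiable ℝ h)
    (hfconv : ∀ a b : E, f a + ⟪gradient f a, b - a⟫ ≤ f b)
    (hhuc : ∀ a b : E, (1 / (p : ℝ)) * ‖b - a‖ ^ p ≤
      h b - h a - ⟪gradient h a, b - a⟫)
    (x y z : ℕ → E) (hz0 : z 0 = x 0)
    (hx : ∀ k : ℕ, x (k + 1) =
      ((p : ℝ) / ((k : ℝ) + (p : ℝ))) • z k + ((k : ℝ) / ((k : ℝ) + (p : ℝ))) • y k)
    (hz : ∀ k : ℕ, gradient h (z (k + 1)) = gradient h (z k)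
      - (ε * C * (p : ℝ) * (risingFactorial (k + 1) (p - 1) : ℝ)) • gradient f (y (k + 1)))
    (hy : ∀ k : ℕ, M * ε ^ (1 / ((p : ℝ) - 1)) *
        ‖gradient f (y k)‖ ^ ((p : ℝ) / ((p : ℝ) - 1))
      ≤ ⟪gradient f (y k), x k - y k⟫) :
    ∀ k : ℕ, C * (risingFactorial k p : ℝ) * f (y k) ≤
      C * (p : ℝ) * (∑ i ∈ Finset.range (k + 1), (risingFactorial i (p - 1) : ℝ) *
          (f (y i) + ⟪gradient f (y i), z k - y i⟫))
        + (1 / ε) * (h (z k) - h (x 0) - ⟪gradient h (x 0), z k - x 0⟫) := by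
  -- telescoped gradient identity
  have grad_z : ∀ k : ℕ, gradient h (z k) = gradient h (x 0)
      - (ε * C * (p : ℝ)) • ∑ i ∈ Finset.range (k + 1),
          (risingFactorial i (p - 1) : ℝ) • gradient f (y i) := by
    intro k
    induction k with
    | zero =>
      rw [hz0]
      simp [rf_zero (show 0 < p - 1 by omega)]
    | succ n ih =>
      rw [hz n, Finset.sum_range_succ, ih, smul_add, smul_smul]
      module
  -- step 1 : z k is (almost) a minimizer of the estimate function
  have step1 : ∀ (k : ℕ) (w : E),
      (C * (p : ℝ) * (∑ i ∈ Finset.range (k + 1), (risingFactorial i (p - 1) : ℝ) *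
          (f (y i) + ⟪gradient f (y i), z k - y i⟫))
        + (1 / ε) * (h (z k) - h (x 0) - ⟪gradient h (x 0), z k - x 0⟫))
        + 1 / (ε * (p : ℝ)) * ‖w - z k‖ ^ p ≤
      C * (p : ℝ) * (∑ i ∈ Finset.range (k + 1), (risingFactorial i (p - 1) : ℝ) *
          (f (y i) + ⟪gradient f (y i), w - y i⟫))
        + (1 / ε) * (h w - h (x 0) - ⟪gradient h (x 0), w - x 0⟫) := by
    intro k w
    have h2 : ⟪gradient h (z k), w - z k⟫ = ⟪gradient h (x 0), w - z k⟫
        - ε * C * (p : ℝ) * ∑ i ∈ Finset.range (k + 1),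
            (risingFactorial i (p - 1) : ℝ) * ⟪gradient f (y i), w - z k⟫ := by
      rw [grad_z k, inner_sub_left, real_inner_smul_left, sum_inner]
      simp only [real_inner_smul_left]
    have h3 : (∑ i ∈ Finset.range (k + 1), (risingFactorial i (p - 1) : ℝ) *
          (f (y i) + ⟪gradient f (y i), w - y i⟫))
        = (∑ i ∈ Finset.range (k + 1), (risingFactorial i (p - 1) : ℝ) *
          (f (y i) + ⟪gradient f (y i), z k - y i⟫))
        + ∑ i ∈ Finset.range (k + 1),
            (risingFactorial i (p - 1) : ℝ) * ⟪gradient f (y i), w - z k⟫ := by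
      rw [← Finset.sum_add_distrib]
      apply Finset.sum_congr rfl
      intro i _
      have hsplit : ⟪gradient f (y i), w - y i⟫
          = ⟪gradient f (y i), z k - y i⟫ + ⟪gradient f (y i), w - z k⟫ := by
        rw [← inner_add_right]
        congr 1
        abel
      rw [hsplit]
      ring
    have h4 : ⟪gradient h (x 0), w - x 0⟫
        = ⟪gradient h (x 0), z k - x 0⟫ + ⟪gradient h (x 0), w - z k⟫ := by
      rw [← inner_add_right]
      congr 1
      abel
    have h1 : 1 / (ε * (p : ℝ)) * ‖w - z k‖ ^ p
        ≤ (1 / ε) * (h w - h (z k) - ⟪gradient h (z k), w - z k⟫) := by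
      have hm := mul_le_mul_of_nonneg_left (hhuc (z k) w) (le_of_lt (one_div_pos.mpr hε))
      calc 1 / (ε * (p : ℝ)) * ‖w - z k‖ ^ p
          = (1 / ε) * ((1 / (p : ℝ)) * ‖w - z k‖ ^ p) := by ring
        _ ≤ _ := hm
    have hkey : (1 / ε) * (h w - h (z k) - ⟪gradient h (z k), w - z k⟫)
        = C * (p : ℝ) * (∑ i ∈ Finset.range (k + 1),
            (risingFactorial i (p - 1) : ℝ) * ⟪gradient f (y i), w - z k⟫)
          + (1 / ε) * (h w - h (z k) - ⟪gradient h (x 0), w - z k⟫) := by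
      rw [h2]
      field_simp
      ring
    rw [h3, h4]
    rw [hkey] at h1
    linarith [h1]
  -- main induction
  intro k
  induction k with
  | zero =>
    rw [hz0]
    simp [rf_zero (show 0 < p by omega), rf_zero (show 0 < p - 1 by omega),
      Finset.sum_range_one]
  | succ n ih =>
    have hnp : (0:ℝ) < (n : ℝ) + (p : ℝ) := by positivity
    have hps : p - 1 + 1 = p := by omega
    have hR1 : (risingFactorial n p : ℝ)
        = (n : ℝ) * (risingFactorial (n + 1) (p - 1) : ℝ) := by
      have hh1 := rf_succ_left n (p - 1)
      rw [hps] at hh1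
      exact_mod_cast hh1
    have hR3 : (risingFactorial (n + 1) p : ℝ)
        = ((n : ℝ) + (p : ℝ)) * (risingFactorial (n + 1) (p - 1) : ℝ) := by
      have hh1 := rf_succ_right (n + 1) (p - 1)
      rw [hps] at hh1
      rw [show n + 1 + (p - 1) = n + p by omega] at hh1
      push_cast [hh1]
      ring
    have hrfpos : (0:ℝ) < (risingFactorial (n + 1) (p - 1) : ℝ) := by
      exact_mod_cast rf_pos (n + 1) (p - 1) (by omega)
    have hxinner : ((n : ℝ) + (p : ℝ)) * ⟪gradient f (y (n + 1)), x (n + 1) - y (n + 1)⟫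
        = (p : ℝ) * ⟪gradient f (y (n + 1)), z n - y (n + 1)⟫
          + (n : ℝ) * ⟪gradient f (y (n + 1)), y n - y (n + 1)⟫ := by
      rw [hx n]
      rw [inner_sub_right, inner_add_right, real_inner_smul_right, real_inner_smul_right,
        inner_sub_right, inner_sub_right]
      field_simp
      ring
    have hsplitz : ⟪gradient f (y (n + 1)), z (n + 1) - y (n + 1)⟫
        = ⟪gradient f (y (n + 1)), z (n + 1) - z n⟫
          + ⟪gradient f (y (n + 1)), z n - y (n + 1)⟫ := by
      rw [← inner_add_right]
      congr 1
      abel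
    have hcauchy : -(‖gradient f (y (n + 1))‖ * ‖z (n + 1) - z n‖)
        ≤ ⟪gradient f (y (n + 1)), z (n + 1) - z n⟫ :=
      neg_abs_le _ |>.trans' (by
        have := abs_real_inner_le_norm (gradient f (y (n + 1))) (z (n + 1) - z n)
        linarith)
    have hbound : (C * (risingFactorial (n + 1) (p - 1) : ℝ)) * (p : ℝ)
        * ((p : ℝ) - 1) ^ (p - 1)
        ≤ M ^ (p - 1) * ((n : ℝ) + (p : ℝ)) ^ (p - 1) := by
      have hnat := rf_le n (p - 1)
      rw [show n + 1 + (p - 1) = n + p by omega, hps] at hnat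
      have hcast : (risingFactorial (n + 1) (p - 1) : ℝ) * ((p : ℝ) - 1) ^ (p - 1)
          ≤ (((n : ℝ) + (p : ℝ)) * (p : ℝ)) ^ (p - 1) := by
        have hc := (Nat.cast_le (α := ℝ)).mpr hnat
        push_cast [Nat.cast_sub (show 1 ≤ p by omega)] at hc
        exact hc
      have hP0 : (0:ℝ) < (p : ℝ) := by positivity
      have hpowP : ((p:ℝ)) ^ p = ((p:ℝ)) ^ (p - 1) * (p:ℝ) := by
        rw [← pow_succ, hps]
      calc (C * (risingFactorial (n + 1) (p - 1) : ℝ)) * (p : ℝ) * ((p : ℝ) - 1) ^ (p - 1)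
          = C * ((risingFactorial (n + 1) (p - 1) : ℝ) * ((p : ℝ) - 1) ^ (p - 1)) * (p : ℝ) := by
            ring
        _ ≤ C * ((((n : ℝ) + (p : ℝ)) * (p : ℝ)) ^ (p - 1)) * (p : ℝ) := by
            apply mul_le_mul_of_nonneg_right (mul_le_mul_of_nonneg_left hcast hC.le) hP0.le
        _ = C * ((p:ℝ) ^ p * ((n : ℝ) + (p : ℝ)) ^ (p - 1)) := by
            rw [mul_pow, hpowP]
            ring
        _ ≤ (M ^ (p - 1) / (p:ℝ) ^ p) * ((p:ℝ) ^ p * ((n : ℝ) + (p : ℝ)) ^ (p - 1)) := by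
            apply mul_le_mul_of_nonneg_right hC' (by positivity)
        _ = M ^ (p - 1) * ((n : ℝ) + (p : ℝ)) ^ (p - 1) := by
            field_simp
    have hyoung := young_aux p hp hε hM
      (mul_pos hC hrfpos) hnp (norm_nonneg (gradient f (y (n + 1))))
      (norm_nonneg (z (n + 1) - z n)) hbound
    have hm1 := mul_le_mul_of_nonneg_left (hfconv (y (n + 1)) (y n))
      (show (0:ℝ) ≤ C * ((n : ℝ) * (risingFactorial (n + 1) (p - 1) : ℝ)) by positivity)
    have hm2 := mul_le_mul_of_nonneg_left hcauchy
      (show (0:ℝ) ≤ C * (risingFactorial (n + 1) (p - 1) : ℝ) * (p : ℝ) by positivity)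
    have hm3 := mul_le_mul_of_nonneg_left (hy (n + 1))
      (show (0:ℝ) ≤ C * (risingFactorial (n + 1) (p - 1) : ℝ) * ((n : ℝ) + (p : ℝ)) by positivity)
    have hxinner' : C * (risingFactorial (n + 1) (p - 1) : ℝ)
          * (((n : ℝ) + (p : ℝ)) * ⟪gradient f (y (n + 1)), x (n + 1) - y (n + 1)⟫)
        = C * (risingFactorial (n + 1) (p - 1) : ℝ)
          * ((p : ℝ) * ⟪gradient f (y (n + 1)), z n - y (n + 1)⟫
            + (n : ℝ) * ⟪gradient f (y (n + 1)), y n - y (n + 1)⟫) := by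
      rw [hxinner]
    have step := step1 n (z (n + 1))
    rw [hR1] at ih
    rw [Finset.sum_range_succ, hR3, hsplitz]
    linarith [ih, step, hm1, hm2, hm3, hyoung, hxinner']
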